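/- Let A ⊂ ℝ be a finite set that is of SzT-type with parameter α = 2 and coefficient d > 0, let m ≥ 3 be an integer, and let τ ≥ 1 be real. Then the number of m-tuples (a₁,…,a_m) ∈ A^m with |(A − a₁) ∩ (A − a₂) ∩ ⋯ ∩ (A − a_m)| ≥ τ is at most d · |A| · E_{m−1,3}(A) / τ³. -/

import Mathlib

open scoped Pointwise Classical

/-- `delta X Y s` is the number of representations of `s` as `x - y`, `x ∈ X`, `y ∈ Y`. -/
noncomputable def delta (X Y : Finset ℝ) (s : ℝ) : ℕ :=
  ((X ×ˢ Y).filter fun p => p.1 - p.2 = s).card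

/-- `X` is of Szemerédi–Trotter type with parameter `α = 2` and coefficient `d`. -/
def SzTType2 (X : Finset ℝ) (d : ℝ) : Prop :=
  ∀ (Y : Finset ℝ) (τ : ℝ), 1 ≤ τ →
    (((X - Y).filter fun s => τ ≤ (delta X Y s : ℝ)).card : ℝ)
      ≤ d * X.card * (Y.card : ℝ) ^ 2 / τ ^ 3

/-- `A_{x⃗} = A ∩ (A - x₁) ∩ ⋯ ∩ (A - x_m)`, realized as the set of `z ∈ A`
with `z + xᵢ ∈ A` for all `i`. -/
noncomputable def interFiber (A : Finset ℝ) {m : ℕ} (x : Fin m → ℝ) : Finset ℝ :=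
  A.filter fun z => ∀ i, z + x i ∈ A

/-- The energy `E_{k,l}(A) = Σ_{x⃗ ∈ ℝ^{k-1}} |A_{x⃗}|ˡ`; the sum is restricted to
`(A - A)^{k-1}`, which carries all the nonzero terms. -/
noncomputable def Ekl (A : Finset ℝ) (k l : ℕ) : ℕ :=
  ∑ x ∈ Fintype.piFinset (fun _ : Fin (k - 1) => A - A), (interFiber A x).card ^ l

theorem rich_tuples_of_SzT_type (A : Finset ℝ) (d : ℝ) (hd : 0 < d)
    (hA : SzTType2 A d) (m : ℕ) (hm : 3 ≤ m) (τ : ℝ) (hτ : 1 ≤ τ) :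
    ((((Fintype.piFinset fun _ : Fin m => A).filter fun a =>
        τ ≤ ((((A.image fun t => t - a ⟨0, by omega⟩).filter fun z =>
          ∀ i, z + a i ∈ A).card : ℝ))).card : ℝ))
      ≤ d * A.card * (Ekl A (m - 1) 3 : ℝ) / τ ^ 3 := by
  classical
  have hτ0 : (0:ℝ) < τ := lt_of_lt_of_le one_pos hτ
  have h0m : 0 < m := by omega
  have hLm : m - 1 < m := by omega
  set X0 : Fin m := ⟨0, h0m⟩ with hX0
  set L : Fin m := ⟨m - 1, hLm⟩ with hLdef
  set f : (Fin m → ℝ) → (Fin (m - 1 - 1) → ℝ) :=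
    fun a j => a ⟨j.1 + 1, by have := j.isLt; omega⟩ - a X0 with hfdef
  set T := (Fintype.piFinset fun _ : Fin m => A).filter (fun a =>
        τ ≤ ((((A.image fun t => t - a X0).filter fun z =>
          ∀ i, z + a i ∈ A).card : ℝ))) with hT
  show (T.card : ℝ) ≤ d * A.card * (Ekl A (m - 1) 3 : ℝ) / τ ^ 3
  have hmem : ∀ a ∈ T, f a ∈ Fintype.piFinset (fun _ : Fin (m - 1 - 1) => A - A) := by
    intro a ha
    rw [hT, Finset.mem_filter, Fintype.mem_piFinset] at ha
    rw [Fintype.mem_piFinset]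
    intro j
    exact Finset.sub_mem_sub (ha.1 _) (ha.1 _)
  have h1 : T.card = ∑ x ∈ Fintype.piFinset (fun _ : Fin (m - 1 - 1) => A - A),
      (T.filter fun a => f a = x).card :=
    Finset.card_eq_sum_card_fiberwise hmem
  have h2 : ∀ x ∈ Fintype.piFinset (fun _ : Fin (m - 1 - 1) => A - A),
      ((T.filter fun a => f a = x).card : ℝ)
        ≤ d * A.card * ((interFiber A x).card : ℝ) ^ 3 / τ ^ 3 := by
    intro x hx
    set Y := interFiber A x with hY
    set R := (A - Y).filter fun s => τ ≤ (delta A Y s : ℝ) with hRdef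
    -- key facts about members of the fiber
    have hfiber : ∀ a, a ∈ T.filter (fun a => f a = x) →
        (∀ i, a i ∈ A) ∧ a X0 ∈ Y ∧ (a L - a X0) ∈ R := by
      intro a ha
      rw [Finset.mem_filter, hT, Finset.mem_filter, Fintype.mem_piFinset] at ha
      obtain ⟨⟨hpi, hrich⟩, hfa⟩ := ha
      have hx' : ∀ j : Fin (m - 1 - 1),
          x j = a ⟨j.1 + 1, by have := j.isLt; omega⟩ - a X0 := by
        intro j; exact (congrFun hfa j).symm
      have ha0Y : a X0 ∈ Y := by
        rw [hY, interFiber, Finset.mem_filter]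
        refine ⟨hpi X0, fun j => ?_⟩
        rw [hx' j]
        have e : a X0 + (a ⟨j.1 + 1, by have := j.isLt; omega⟩ - a X0)
            = a ⟨j.1 + 1, by have := j.isLt; omega⟩ := by ring
        rw [e]; exact hpi _
      refine ⟨hpi, ha0Y, ?_⟩
      rw [hRdef, Finset.mem_filter]
      refine ⟨Finset.sub_mem_sub (hpi L) ha0Y, ?_⟩
      refine hrich.trans (Nat.cast_le.mpr ?_)
      -- card of the intersection set ≤ delta A Y (a L - a X0)
      rw [delta]
      apply Finset.card_le_card_of_injOn (fun z => (z + a L, z + a X0))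
      · intro z hz
        rw [Finset.mem_coe, Finset.mem_filter] at hz
        obtain ⟨_, hz2⟩ := hz
        rw [Finset.mem_coe, Finset.mem_filter, Finset.mem_product]
        refine ⟨⟨hz2 L, ?_⟩, by ring⟩
        rw [hY, interFiber, Finset.mem_filter]
        refine ⟨hz2 X0, fun j => ?_⟩
        rw [hx' j]
        have e : z + a X0 + (a ⟨j.1 + 1, by have := j.isLt; omega⟩ - a X0)
            = z + a ⟨j.1 + 1, by have := j.isLt; omega⟩ := by ring
        rw [e]; exact hz2 _
      · intro z _ w _ hzw
        have := congrArg Prod.snd hzw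
        simpa using this
    have hsub : (T.filter fun a => f a = x).card ≤ (R ×ˢ Y).card := by
      apply Finset.card_le_card_of_injOn (fun a => (a L - a X0, a X0))
      · intro a ha
        obtain ⟨_, h2, h3⟩ := hfiber a ha
        exact Finset.mem_product.mpr ⟨h3, h2⟩
      · intro a ha b hb hab
        have h1' : a L - a X0 = b L - b X0 := congrArg Prod.fst hab
        have h2' : a X0 = b X0 := congrArg Prod.snd hab
        have hfa : f a = x := (Finset.mem_filter.mp ha).2
        have hfb : f b = x := (Finset.mem_filter.mp hb).2
        funext i
        rcases Nat.eq_zero_or_pos i.1 with h0 | h0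
        · have : i = X0 := Fin.ext h0
          rw [this, h2']
        · rcases Nat.lt_or_ge i.1 (m - 1) with hi1 | hi1
          · have hj : i.1 - 1 < m - 1 - 1 := by omega
            have hieq : i = ⟨(⟨i.1 - 1, hj⟩ : Fin (m - 1 - 1)).1 + 1, by omega⟩ :=
              Fin.ext (by simp; omega)
            have ea : a i - a X0 = x ⟨i.1 - 1, hj⟩ := by
              rw [← hfa, hfdef]; simp only; rw [← hieq]
            have eb : b i - b X0 = x ⟨i.1 - 1, hj⟩ := by
              rw [← hfb, hfdef]; simp only; rw [← hieq]
            have : a i - a X0 = b i - b X0 := by rw [ea, eb]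
            linarith [this, h2']
          · have : i = L := Fin.ext (by have := i.isLt; simp [hLdef]; omega)
            rw [this]
            have : a L = b L := by
              have := h1'
              linarith [h2']
            exact this
    have hRcard : (R.card : ℝ) ≤ d * A.card * (Y.card : ℝ) ^ 2 / τ ^ 3 := hA Y τ hτ
    have hYnn : (0:ℝ) ≤ (Y.card : ℝ) := Nat.cast_nonneg _
    calc ((T.filter fun a => f a = x).card : ℝ)
        ≤ ((R ×ˢ Y).card : ℝ) := by exact_mod_cast hsub
      _ = (R.card : ℝ) * (Y.card : ℝ) := by rw [Finset.card_product]; push_cast; ring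
      _ ≤ (d * A.card * (Y.card : ℝ) ^ 2 / τ ^ 3) * (Y.card : ℝ) :=
          mul_le_mul_of_nonneg_right hRcard hYnn
      _ = d * A.card * (Y.card : ℝ) ^ 3 / τ ^ 3 := by
          field_simp
  calc (T.card : ℝ)
      = ∑ x ∈ Fintype.piFinset (fun _ : Fin (m - 1 - 1) => A - A),
          ((T.filter fun a => f a = x).card : ℝ) := by rw [h1]; push_cast; rfl
    _ ≤ ∑ x ∈ Fintype.piFinset (fun _ : Fin (m - 1 - 1) => A - A),
          d * A.card * ((interFiber A x).card : ℝ) ^ 3 / τ ^ 3 := Finset.sum_le_sum h2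
    _ = d * A.card * (Ekl A (m - 1) 3 : ℝ) / τ ^ 3 := by
        rw [Ekl]
        push_cast
        rw [Finset.mul_sum, Finset.sum_div]
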